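/- Let v : ℝ → [0,∞) be a Lebesgue measurable function with L¹({v > 0}) < ∞, such that {v^∧ = 0} does not essentially disconnect {v > 0}. Then there exists an open bounded interval (a,b) ⊂ ℝ such that {v^∧ > 0} = (a,b). -/

import Mathlib

open MeasureTheory Metric Set Filter Topology ENNReal NNReal

noncomputable section

/-- The set of points where the measurable set `A` has `n`-dimensional density `t`. -/
def densityPt {X : Type*} [MetricSpace X] [MeasureSpace X] (A : Set X) (t : ℝ≥0∞) : Set X :=
  {x | Tendsto (fun ρ : ℝ => volume (A ∩ ball x ρ) / volume (ball x ρ)) (𝓝[>] 0) (𝓝 t)}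

/-- The essential boundary `∂ᵉA = X \ (A^(0) ∪ A^(1))`. -/
def essBoundary {X : Type*} [MetricSpace X] [MeasureSpace X] (A : Set X) : Set X :=
  (densityPt A 0 ∪ densityPt A 1)ᶜ

/-- Approximate lower limit `f^∧(x) = sup {t : x ∈ {f > t}^(1)}`. -/
def apLower {X : Type*} [MetricSpace X] [MeasureSpace X] (f : X → ℝ) (x : X) : EReal :=
  sSup {t : EReal | ∃ s : ℝ, t = (s : EReal) ∧ x ∈ densityPt {y | s < f y} 1}

/-- Approximate upper limit `f^∨(x) = inf {t : x ∈ {f > t}^(0)}`. -/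
def apUpper {X : Type*} [MetricSpace X] [MeasureSpace X] (f : X → ℝ) (x : X) : EReal :=
  sInf {t : EReal | ∃ s : ℝ, t = (s : EReal) ∧ x ∈ densityPt {y | s < f y} 0}

/-- `K` essentially disconnects `G`: there is a nontrivial Borel partition `{Gp, Gm}` of `G`
with `μH[d]((G^(1) ∩ ∂ᵉGp ∩ ∂ᵉGm) \ K) = 0`, where `d` is the codimension-one exponent. -/
def essentiallyDisconnects {X : Type*} [MetricSpace X] [MeasureSpace X] [BorelSpace X]
    (d : ℝ) (K G : Set X) : Prop :=
  ∃ Gp Gm : Set X, MeasurableSet Gp ∧ MeasurableSet Gm ∧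
    volume (Gp ∩ Gm) = 0 ∧ volume (symmDiff G (Gp ∪ Gm)) = 0 ∧
    0 < volume Gp ∧ 0 < volume Gm ∧
    μH[d] ((densityPt G 1 ∩ essBoundary Gp ∩ essBoundary Gm) \ K) = 0

/-! ### Auxiliary lemmas -/

lemma ball_vol_pos {x r : ℝ} (hr : 0 < r) : 0 < volume (ball x r) := by
  rw [Real.volume_ball]; exact ENNReal.ofReal_pos.mpr (by linarith)

lemma ball_vol_ne_top (x r : ℝ) : volume (ball x r) ≠ ⊤ := by
  rw [Real.volume_ball]; exact ofReal_ne_top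

/-- conversion between closedBall and ball density ratios on ℝ -/
lemma ratio_cb_eq (s : Set ℝ) (x r : ℝ) :
    volume (s ∩ closedBall x r) / volume (closedBall x r)
      = volume (s ∩ ball x r) / volume (ball x r) := by
  rw [Real.volume_ball, Real.volume_closedBall]
  congr 1
  apply le_antisymm
  · calc volume (s ∩ closedBall x r) ≤ volume ((s ∩ ball x r) ∪ sphere x r) := by
          apply measure_mono
          intro y hy
          rcases eq_or_lt_of_le (mem_closedBall.1 hy.2) with h | h
          · exact Or.inr h
          · exact Or.inl ⟨hy.1, h⟩
       _ ≤ volume (s ∩ ball x r) + volume (sphere x r) := measure_union_le _ _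
       _ = volume (s ∩ ball x r) := by
          rw [Measure.addHaar_sphere volume x r, add_zero]
  · exact measure_mono (inter_subset_inter_right _ ball_subset_closedBall)

/-- monotonicity of density-1 points -/
lemma densityPt_mono {A B : Set ℝ} (h : A ⊆ B) : densityPt A 1 ⊆ densityPt B 1 := by
  intro x hx
  have h1 : ∀ᶠ r in 𝓝[>] (0:ℝ),
      volume (A ∩ ball x r) / volume (ball x r) ≤ volume (B ∩ ball x r) / volume (ball x r) := by
    filter_upwards with r
    exact ENNReal.div_le_div_right (measure_mono (inter_subset_inter_left _ h)) _
  have h2 : ∀ᶠ r in 𝓝[>] (0:ℝ),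
      volume (B ∩ ball x r) / volume (ball x r) ≤ 1 := by
    filter_upwards [self_mem_nhdsWithin] with r (hr : 0 < r)
    rw [← ENNReal.div_self (ne_of_gt (ball_vol_pos hr)) (ball_vol_ne_top x r)]
    exact ENNReal.div_le_div_right (measure_mono inter_subset_right) _
  exact tendsto_of_tendsto_of_tendsto_of_le_of_le' hx tendsto_const_nhds h1 h2

/-- the Lebesgue density theorem, ball form -/
lemma ae_density (s : Set ℝ) (hs : MeasurableSet s) :
    ∀ᵐ x, Tendsto (fun r : ℝ => volume (s ∩ ball x r) / volume (ball x r)) (𝓝[>] 0)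
      (𝓝 (s.indicator 1 x)) := by
  filter_upwards [Besicovitch.ae_tendsto_measure_inter_div_of_measurableSet volume hs] with x hx
  have : (fun r : ℝ => volume (s ∩ closedBall x r) / volume (closedBall x r))
      = fun r : ℝ => volume (s ∩ ball x r) / volume (ball x r) := by
    funext r; exact ratio_cb_eq s x r
  rwa [this] at hx

/-- a measurable set of positive measure contains a density point -/
lemma exists_densityPt {s : Set ℝ} (hs : MeasurableSet s) (h : 0 < volume s) :
    ∃ x ∈ s, x ∈ densityPt s 1 := by
  have := ae_density s hs
  by_contra hc
  push_neg at hc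
  have hsub : s ⊆ {x | ¬ Tendsto (fun r : ℝ => volume (s ∩ ball x r) / volume (ball x r))
      (𝓝[>] 0) (𝓝 (s.indicator 1 x))} := by
    intro x hx
    have hind : s.indicator (1 : ℝ → ℝ≥0∞) x = 1 := indicator_of_mem hx 1
    intro ht
    exact hc x hx (by rw [densityPt, mem_setOf_eq]; rwa [hind] at ht)
  have h0 : volume s = 0 := measure_mono_null hsub this
  exact absurd h0 (ne_of_gt h)

/-- density-1 points are almost all in the set -/
lemma densityPt_subset_ae (s : Set ℝ) (hs : MeasurableSet s) :
    volume (densityPt s 1) ≤ volume s := by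
  have hae := ae_density s hs
  set N := {x : ℝ | ¬ Tendsto (fun r : ℝ => volume (s ∩ ball x r) / volume (ball x r))
      (𝓝[>] 0) (𝓝 (s.indicator 1 x))} with hN
  have hNnull : volume N = 0 := hae
  have hsub : densityPt s 1 ⊆ s ∪ N := by
    intro x hx
    by_cases hxs : x ∈ s
    · exact Or.inl hxs
    · refine Or.inr ?_
      intro ht
      have hind : s.indicator (1 : ℝ → ℝ≥0∞) x = 0 := indicator_of_notMem hxs 1
      rw [hind] at ht
      have := tendsto_nhds_unique hx ht
      simp at this
  calc volume (densityPt s 1) ≤ volume (s ∪ N) := measure_mono hsub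
    _ ≤ volume s + volume N := measure_union_le _ _
    _ = volume s := by rw [hNnull, add_zero]

/-- one-sided positivity at density points -/
lemma left_pos {E : Set ℝ} {c : ℝ} (hc : c ∈ densityPt E 1) {ρ : ℝ} (hρ : 0 < ρ) :
    0 < volume (E ∩ Ioo (c - ρ) c) := by
  by_contra h
  push_neg at h
  have h0 : volume (E ∩ Ioo (c - ρ) c) = 0 := le_antisymm h zero_le
  have hhalf : ∀ r : ℝ, 0 < r → r < ρ →
      volume (E ∩ ball c r) / volume (ball c r) ≤ 1/2 := by
    intro r hr hrρ
    have hsub : E ∩ ball c r ⊆ (E ∩ Ioo (c - ρ) c) ∪ Ico c (c + r) := by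
      intro y hy
      rw [Real.ball_eq_Ioo] at hy
      rcases lt_or_ge y c with h' | h'
      · exact Or.inl ⟨hy.1, by constructor <;> [linarith [hy.2.1]; exact h']⟩
      · exact Or.inr ⟨h', hy.2.2⟩
    have hnum : volume (E ∩ ball c r) ≤ ENNReal.ofReal r := by
      calc volume (E ∩ ball c r) ≤ volume ((E ∩ Ioo (c - ρ) c) ∪ Ico c (c + r)) :=
            measure_mono hsub
        _ ≤ volume (E ∩ Ioo (c - ρ) c) + volume (Ico c (c + r)) := measure_union_le _ _
        _ = ENNReal.ofReal r := by rw [h0, zero_add, Real.volume_Ico]; congr 1; ring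
    calc volume (E ∩ ball c r) / volume (ball c r)
        ≤ ENNReal.ofReal r / volume (ball c r) := ENNReal.div_le_div_right hnum _
      _ = 1/2 := by
          rw [Real.volume_ball, ← ENNReal.ofReal_div_of_pos (by linarith)]
          have hr2 : r / (2*r) = 1/2 := by field_simp
          rw [hr2, ENNReal.ofReal_div_of_pos (by norm_num), ENNReal.ofReal_one,
            ENNReal.ofReal_ofNat]
  have hev : ∀ᶠ r in 𝓝[>] (0:ℝ),
      volume (E ∩ ball c r) / volume (ball c r) ∈ Ioi (1/2 : ℝ≥0∞) := by
    apply hc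
    exact IsOpen.mem_nhds isOpen_Ioi (by norm_num)
  have hev2 : ∀ᶠ r in 𝓝[>] (0:ℝ), 0 < r ∧ r < ρ := by
    filter_upwards [self_mem_nhdsWithin, Ioo_mem_nhdsGT hρ] with r h1 h2
    exact ⟨h1, h2.2⟩
  obtain ⟨r, hr1, hr2⟩ := (hev.and hev2).exists
  exact absurd (hhalf r hr2.1 hr2.2) (not_le.mpr hr1)

lemma right_pos {E : Set ℝ} {c : ℝ} (hc : c ∈ densityPt E 1) {ρ : ℝ} (hρ : 0 < ρ) :
    0 < volume (E ∩ Ioo c (c + ρ)) := by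
  by_contra h
  push_neg at h
  have h0 : volume (E ∩ Ioo c (c + ρ)) = 0 := le_antisymm h zero_le
  have hhalf : ∀ r : ℝ, 0 < r → r < ρ →
      volume (E ∩ ball c r) / volume (ball c r) ≤ 1/2 := by
    intro r hr hrρ
    have hsub : E ∩ ball c r ⊆ (E ∩ Ioo c (c + ρ)) ∪ Ioc (c - r) c := by
      intro y hy
      rw [Real.ball_eq_Ioo] at hy
      rcases le_or_gt y c with h' | h'
      · exact Or.inr ⟨hy.2.1, h'⟩
      · exact Or.inl ⟨hy.1, h', by linarith [hy.2.2]⟩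
    have hnum : volume (E ∩ ball c r) ≤ ENNReal.ofReal r := by
      calc volume (E ∩ ball c r) ≤ volume ((E ∩ Ioo c (c + ρ)) ∪ Ioc (c - r) c) :=
            measure_mono hsub
        _ ≤ volume (E ∩ Ioo c (c + ρ)) + volume (Ioc (c - r) c) := measure_union_le _ _
        _ = ENNReal.ofReal r := by rw [h0, zero_add, Real.volume_Ioc]; congr 1; ring
    calc volume (E ∩ ball c r) / volume (ball c r)
        ≤ ENNReal.ofReal r / volume (ball c r) := ENNReal.div_le_div_right hnum _
      _ = 1/2 := by
          rw [Real.volume_ball, ← ENNReal.ofReal_div_of_pos (by linarith)]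
          have hr2 : r / (2*r) = 1/2 := by field_simp
          rw [hr2, ENNReal.ofReal_div_of_pos (by norm_num), ENNReal.ofReal_one,
            ENNReal.ofReal_ofNat]
  have hev : ∀ᶠ r in 𝓝[>] (0:ℝ),
      volume (E ∩ ball c r) / volume (ball c r) ∈ Ioi (1/2 : ℝ≥0∞) := by
    apply hc
    exact IsOpen.mem_nhds isOpen_Ioi (by norm_num)
  have hev2 : ∀ᶠ r in 𝓝[>] (0:ℝ), 0 < r ∧ r < ρ := by
    filter_upwards [self_mem_nhdsWithin, Ioo_mem_nhdsGT hρ] with r h1 h2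
    exact ⟨h1, h2.2⟩
  obtain ⟨r, hr1, hr2⟩ := (hev.and hev2).exists
  exact absurd (hhalf r hr2.1 hr2.2) (not_le.mpr hr1)

/-- every point is a density-1 point of `univ` -/
lemma densityPt_univ (x : ℝ) : x ∈ densityPt (univ : Set ℝ) 1 := by
  rw [densityPt, mem_setOf_eq]
  have : ∀ᶠ r in 𝓝[>] (0:ℝ),
      volume ((univ : Set ℝ) ∩ ball x r) / volume (ball x r) = 1 := by
    filter_upwards [self_mem_nhdsWithin] with r (hr : 0 < r)
    rw [univ_inter, ENNReal.div_self (ne_of_gt (ball_vol_pos hr)) (ball_vol_ne_top x r)]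
  exact Tendsto.congr' (this.mono fun r h => h.symm) tendsto_const_nhds

lemma apLower_nonneg {v : ℝ → ℝ} (hnonneg : ∀ x, 0 ≤ v x) (x : ℝ) : 0 ≤ apLower v x := by
  have key : ∀ s : ℝ, s < 0 → (s : EReal) ≤ apLower v x := by
    intro s hs
    apply le_sSup
    refine ⟨s, rfl, ?_⟩
    have : {y | s < v y} = univ := by
      ext y; simp only [mem_setOf_eq, mem_univ, iff_true]
      exact lt_of_lt_of_le hs (hnonneg y)
    rw [this]
    exact densityPt_univ x
  by_contra h
  push_neg at h
  obtain ⟨t, ht1, ht2⟩ := EReal.exists_between_coe_real h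
  exact absurd (key t (by exact_mod_cast ht2)) (not_le.mpr ht1)

lemma apLower_pos_iff {v : ℝ → ℝ} (x : ℝ) :
    0 < apLower v x ↔ ∃ s : ℝ, 0 < s ∧ x ∈ densityPt {y | s < v y} 1 := by
  constructor
  · intro h
    rw [apLower, lt_sSup_iff] at h
    obtain ⟨t, ⟨s, rfl, hsd⟩, hts⟩ := h
    exact ⟨s, by exact_mod_cast hts, hsd⟩
  · rintro ⟨s, hs, hsd⟩
    calc (0 : EReal) < (s : EReal) := by exact_mod_cast hs
      _ ≤ apLower v x := le_sSup ⟨s, rfl, hsd⟩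

/-- a set to the right of `c` has density 0 at points left of `c` -/
lemma densityPt_zero_right {A : Set ℝ} {c z : ℝ} (hA : A ⊆ Ioi c) (hz : z < c) :
    z ∈ densityPt A 0 := by
  rw [densityPt, mem_setOf_eq]
  have hev : ∀ᶠ r in 𝓝[>] (0:ℝ), volume (A ∩ ball z r) / volume (ball z r) = 0 := by
    filter_upwards [Ioo_mem_nhdsGT (show (0:ℝ) < c - z by linarith)] with r hr
    have hAb : A ∩ ball z r = ∅ := by
      ext w; simp only [mem_inter_iff, mem_empty_iff_false, iff_false]
      rintro ⟨hwA, hwb⟩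
      rw [Real.ball_eq_Ioo] at hwb
      have h1 : c < w := hA hwA
      have h2 : w < z + r := hwb.2
      have h3 : r < c - z := hr.2
      linarith
    rw [hAb, measure_empty, ENNReal.zero_div]
  exact Tendsto.congr' (hev.mono fun r h => h.symm) tendsto_const_nhds

/-- a set to the left of `c` has density 0 at points right of `c` -/
lemma densityPt_zero_left {A : Set ℝ} {c z : ℝ} (hA : A ⊆ Iio c) (hz : c < z) :
    z ∈ densityPt A 0 := by
  rw [densityPt, mem_setOf_eq]
  have hev : ∀ᶠ r in 𝓝[>] (0:ℝ), volume (A ∩ ball z r) / volume (ball z r) = 0 := by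
    filter_upwards [Ioo_mem_nhdsGT (show (0:ℝ) < z - c by linarith)] with r hr
    have hAb : A ∩ ball z r = ∅ := by
      ext w; simp only [mem_inter_iff, mem_empty_iff_false, iff_false]
      rintro ⟨hwA, hwb⟩
      rw [Real.ball_eq_Ioo] at hwb
      have h1 : w < c := hA hwA
      have h2 : z - r < w := hwb.1
      have h3 : r < z - c := hr.2
      linarith
    rw [hAb, measure_empty, ENNReal.zero_div]
  exact Tendsto.congr' (hev.mono fun r h => h.symm) tendsto_const_nhds

/-- Let `v : ℝ → [0,∞)` be Lebesgue measurable with `ℒ¹({v>0}) < ∞`, such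
that `{v^∧ = 0}` does not essentially disconnect `{v > 0}`. Then there exists an open
bounded interval `(a,b) ⊂ ℝ` with `{v^∧ > 0} = (a,b)`. -/
theorem statement2 (v : ℝ → ℝ) (hmeas : Measurable v) (hnonneg : ∀ x, 0 ≤ v x)
    (hfin : volume {x | 0 < v x} < ⊤)
    (hconn : ¬ essentiallyDisconnects 0 {x | apLower v x = 0} {x | 0 < v x}) :
    ∃ a b : ℝ, {x | 0 < apLower v x} = Ioo a b := by
  set G := {x : ℝ | 0 < v x} with hGdef
  have hGmeas : MeasurableSet G := measurableSet_lt measurable_const hmeas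
  set I := {x : ℝ | 0 < apLower v x} with hIdef
  -- every point of I has I-points strictly on both sides
  have hside : ∀ c ∈ I, (∃ x ∈ I, x < c) ∧ (∃ y ∈ I, c < y) := by
    intro c hc
    obtain ⟨s, hs, hcd⟩ := (apLower_pos_iff c).1 hc
    have hEmeas : MeasurableSet {y | s < v y} := measurableSet_lt measurable_const hmeas
    constructor
    · have h1 : 0 < volume ({y | s < v y} ∩ Ioo (c - 1) c) := left_pos hcd one_pos
      obtain ⟨x, hxmem, hxd⟩ := exists_densityPt (hEmeas.inter measurableSet_Ioo) h1
      exact ⟨x, (apLower_pos_iff x).2 ⟨s, hs, densityPt_mono inter_subset_left hxd⟩,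
        hxmem.2.2⟩
    · have h1 : 0 < volume ({y | s < v y} ∩ Ioo c (c + 1)) := right_pos hcd one_pos
      obtain ⟨y, hymem, hyd⟩ := exists_densityPt (hEmeas.inter measurableSet_Ioo) h1
      exact ⟨y, (apLower_pos_iff y).2 ⟨s, hs, densityPt_mono inter_subset_left hyd⟩,
        hymem.2.1⟩
  -- I is order-connected
  have hmid : ∀ x ∈ I, ∀ y ∈ I, ∀ c, x < c → c < y → c ∈ I := by
    intro x hx y hy c hxc hcy
    by_contra hcI
    have hKc : apLower v c = 0 :=
      le_antisymm (not_lt.mp hcI) (apLower_nonneg hnonneg c)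
    apply hconn
    refine ⟨G ∩ Iio c, G ∩ Ioi c, hGmeas.inter measurableSet_Iio,
      hGmeas.inter measurableSet_Ioi, ?_, ?_, ?_, ?_, ?_⟩
    · have : (G ∩ Iio c) ∩ (G ∩ Ioi c) = ∅ := by
        ext z
        simp only [mem_inter_iff, mem_Iio, mem_Ioi, mem_empty_iff_false, iff_false]
        rintro ⟨⟨-, h1⟩, -, h2⟩; linarith
      rw [this, measure_empty]
    · have hsub : symmDiff G ((G ∩ Iio c) ∪ (G ∩ Ioi c)) ⊆ {c} := by
        intro z hz
        rw [Set.symmDiff_def] at hz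
        rcases hz with hz | hz
        · rcases hz with ⟨hzG, hzn⟩
          by_contra hne
          rcases lt_trichotomy z c with h | h | h
          · exact hzn (Or.inl ⟨hzG, h⟩)
          · exact hne h
          · exact hzn (Or.inr ⟨hzG, h⟩)
        · exact absurd (hz.1.elim (fun h => h.1) (fun h => h.1)) hz.2
      exact measure_mono_null hsub (measure_singleton c)
    · obtain ⟨s, hs, hxd⟩ := (apLower_pos_iff x).1 hx
      have h1 : 0 < volume ({y | s < v y} ∩ Ioo x (x + (c - x))) :=
        right_pos hxd (by linarith)
      refine lt_of_lt_of_le h1 (measure_mono ?_)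
      rintro z ⟨hz1, hz2, hz3⟩
      exact ⟨lt_trans hs hz1, by simp only [mem_Iio]; linarith⟩
    · obtain ⟨s, hs, hyd⟩ := (apLower_pos_iff y).1 hy
      have h1 : 0 < volume ({z | s < v z} ∩ Ioo (y - (y - c)) y) :=
        left_pos hyd (by linarith)
      refine lt_of_lt_of_le h1 (measure_mono ?_)
      rintro z ⟨hz1, hz2, hz3⟩
      exact ⟨lt_trans hs hz1, by simp only [mem_Ioi]; linarith⟩
    · have hempty : (densityPt G 1 ∩ essBoundary (G ∩ Iio c) ∩ essBoundary (G ∩ Ioi c))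
          \ {x | apLower v x = 0} = ∅ := by
        ext z
        simp only [mem_diff, mem_empty_iff_false, iff_false, not_and]
        rintro ⟨⟨-, hbp⟩, hbm⟩
        simp only [essBoundary, mem_compl_iff, mem_union, not_or] at hbp hbm
        simp only [mem_setOf_eq, not_not]
        rcases lt_trichotomy z c with h | h | h
        · exact absurd (densityPt_zero_right (fun w hw => hw.2) h) hbm.1
        · rw [h]; exact hKc
        · exact absurd (densityPt_zero_left (fun w hw => hw.2) h) hbp.1
      rw [hempty]
      exact measure_empty
  -- I has finite measure
  have hIfin : volume I < ⊤ := by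
    have hsub : I ⊆ densityPt G 1 := by
      intro z hz
      obtain ⟨s, hs, hzd⟩ := (apLower_pos_iff z).1 hz
      exact densityPt_mono (fun w hw => lt_trans hs hw) hzd
    calc volume I ≤ volume (densityPt G 1) := measure_mono hsub
      _ ≤ volume G := densityPt_subset_ae G hGmeas
      _ < ⊤ := hfin
  rcases I.eq_empty_or_nonempty with hIe | hne
  · exact ⟨0, 0, by rw [hIe, Ioo_self]⟩
  · have hbddA : BddAbove I := by
      by_contra hb
      obtain ⟨x₀, hx₀⟩ := hne
      have hsub : Ioi x₀ ⊆ I := by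
        intro z hz
        obtain ⟨y, hyI, hzy⟩ := not_bddAbove_iff.1 hb z
        exact hmid x₀ hx₀ y hyI z hz hzy
      have htop : (⊤ : ℝ≥0∞) ≤ volume I := by
        rw [← Real.volume_Ioi (a := x₀)]
        exact measure_mono hsub
      exact absurd (lt_of_le_of_lt htop hIfin) (lt_irrefl _)
    have hbddB : BddBelow I := by
      by_contra hb
      obtain ⟨x₀, hx₀⟩ := hne
      have hsub : Iio x₀ ⊆ I := by
        intro z hz
        obtain ⟨y, hyI, hzy⟩ := not_bddBelow_iff.1 hb z
        exact hmid y hyI x₀ hx₀ z hzy hz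
      have htop : (⊤ : ℝ≥0∞) ≤ volume I := by
        rw [← Real.volume_Iio (a := x₀)]
        exact measure_mono hsub
      exact absurd (lt_of_le_of_lt htop hIfin) (lt_irrefl _)
    refine ⟨sInf I, sSup I, ?_⟩
    ext z
    simp only [mem_Ioo]
    constructor
    · intro hz
      obtain ⟨⟨x, hxI, hxz⟩, ⟨y, hyI, hzy⟩⟩ := hside z hz
      exact ⟨lt_of_le_of_lt (csInf_le hbddB hxI) hxz,
        lt_of_lt_of_le hzy (le_csSup hbddA hyI)⟩
    · rintro ⟨h1, h2⟩
      obtain ⟨x, hxI, hxz⟩ := exists_lt_of_csInf_lt hne h1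
      obtain ⟨y, hyI, hzy⟩ := exists_lt_of_lt_csSup hne h2
      exact hmid x hxI y hyI z hxz hzy
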